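/- Let α ∈ (0,2) and a ∈ ℝ with |a| < 1. Then ∫₁^∞ 2r / ((r²−1)^{α/2} (r²−a²)) dr = (π/sin(απ/2)) · (1−a²)^{−α/2}. -/

import Mathlib

open Real MeasureTheory

lemma real_beta_Ioo (u v : ℝ) (hu : 0 < u) (hv : 0 < v) :
    ∫ x in Set.Ioo (0:ℝ) 1, x ^ (u - 1) * (1 - x) ^ (v - 1)
      = Real.Gamma u * Real.Gamma v / Real.Gamma (u + v) := by
  have h := Complex.Gamma_mul_Gamma_eq_betaIntegral (s := (u:ℂ)) (t := (v:ℂ))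
    (by simpa using hu) (by simpa using hv)
  have key : Complex.betaIntegral u v
      = ((∫ x in Set.Ioo (0:ℝ) 1, x ^ (u - 1) * (1 - x) ^ (v - 1) : ℝ) : ℂ) := by
    rw [Complex.betaIntegral, intervalIntegral.integral_of_le zero_le_one,
      MeasureTheory.integral_Ioc_eq_integral_Ioo]
    have step : ∫ x in Set.Ioo (0:ℝ) 1, (x:ℂ) ^ ((u:ℂ) - 1) * ((1:ℂ) - x) ^ ((v:ℂ) - 1)
        = ∫ x in Set.Ioo (0:ℝ) 1, ((x ^ (u - 1) * (1 - x) ^ (v - 1) : ℝ) : ℂ) := by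
      refine setIntegral_congr_fun measurableSet_Ioo (fun x hx => ?_)
      obtain ⟨hx0, hx1⟩ := hx
      rw [show ((u:ℂ) - 1) = ((u - 1 : ℝ) : ℂ) by push_cast; ring,
        show ((v:ℂ) - 1) = ((v - 1 : ℝ) : ℂ) by push_cast; ring,
        show ((1:ℂ) - (x:ℂ)) = ((1 - x : ℝ) : ℂ) by push_cast; ring,
        ← Complex.ofReal_cpow hx0.le, ← Complex.ofReal_cpow (by linarith : (0:ℝ) ≤ 1 - x)]
      push_cast
      ring
    rw [step]
    exact integral_ofReal
  rw [key] at h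
  have hG : Real.Gamma (u + v) ≠ 0 := (Real.Gamma_pos_of_pos (by linarith)).ne'
  have h2 : (Real.Gamma u : ℂ) * Real.Gamma v
      = (Real.Gamma (u+v) : ℂ) * ((∫ x in Set.Ioo (0:ℝ) 1, x ^ (u - 1) * (1 - x) ^ (v - 1) : ℝ) : ℂ) := by
    simpa [← Complex.ofReal_add, Complex.Gamma_ofReal] using h
  have h3 : Real.Gamma u * Real.Gamma v
      = Real.Gamma (u+v) * ∫ x in Set.Ioo (0:ℝ) 1, x ^ (u - 1) * (1 - x) ^ (v - 1) := by
    exact_mod_cast h2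
  field_simp
  linarith [h3]

lemma beta_Ioi (β : ℝ) (hβ0 : 0 < β) (hβ1 : β < 1) :
    ∫ t in Set.Ioi (0:ℝ), t ^ (-β) / (1 + t) = π / Real.sin (π * β) := by
  have himg : (fun x : ℝ => x / (1 - x)) '' Set.Ioo (0:ℝ) 1 = Set.Ioi 0 := by
    ext t
    constructor
    · rintro ⟨x, ⟨hx0, hx1⟩, rfl⟩
      exact div_pos hx0 (by linarith)
    · intro ht
      have ht' : (0:ℝ) < t := ht
      refine ⟨t / (1 + t), ⟨div_pos ht' (by linarith), by rw [div_lt_one (by linarith)]; linarith⟩, ?_⟩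
      show t / (1+t) / (1 - t / (1+t)) = t
      have h1 : (1:ℝ) - t / (1+t) = 1 / (1+t) := by field_simp; ring
      rw [h1]
      field_simp
  have hderiv : ∀ x ∈ Set.Ioo (0:ℝ) 1, HasDerivWithinAt (fun x : ℝ => x / (1 - x))
      ((1 - x)⁻¹ ^ 2) (Set.Ioo (0:ℝ) 1) x := by
    intro x hx
    have hne : (1:ℝ) - x ≠ 0 := sub_ne_zero_of_ne (ne_of_gt hx.2)
    have := (hasDerivAt_id x).div ((hasDerivAt_id x).const_sub 1) hne
    convert this.hasDerivWithinAt using 1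
    · rfl
    · rfl
    · rfl
    · simp only [id_eq]
      field_simp
      ring
  have hinj : Set.InjOn (fun x : ℝ => x / (1 - x)) (Set.Ioo (0:ℝ) 1) := by
    intro x hx y hy hxy
    have hx1 : (1:ℝ) - x ≠ 0 := by have := hx.2; intro h; linarith [(by linarith : x = 1)]
    have hy1 : (1:ℝ) - y ≠ 0 := by have := hy.2; intro h; linarith [(by linarith : y = 1)]
    field_simp at hxy
    linarith
  have := MeasureTheory.integral_image_eq_integral_abs_deriv_smul measurableSet_Ioo hderiv hinj
    (fun t => t ^ (-β) / (1 + t))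
  rw [himg] at this
  rw [this]
  have hcong : ∫ x in Set.Ioo (0:ℝ) 1, |(1 - x)⁻¹ ^ 2| • ((x / (1-x)) ^ (-β) / (1 + x / (1-x)))
      = ∫ x in Set.Ioo (0:ℝ) 1, x ^ ((1-β) - 1) * (1 - x) ^ (β - 1) := by
    refine setIntegral_congr_fun measurableSet_Ioo (fun x hx => ?_)
    obtain ⟨hx0, hx1⟩ := hx
    have h1x : (0:ℝ) < 1 - x := by linarith
    have h1 : (1:ℝ) + x / (1-x) = (1-x)⁻¹ := by field_simp; ring
    rw [smul_eq_mul, abs_of_nonneg (by positivity), h1,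
      Real.div_rpow hx0.le h1x.le, Real.rpow_neg hx0.le, Real.rpow_neg h1x.le]
    rw [show (1:ℝ) - β - 1 = -β by ring, Real.rpow_neg hx0.le,
      show β - 1 = -(1 - β) by ring, Real.rpow_neg h1x.le]
    have hxb : (0:ℝ) < x ^ β := Real.rpow_pos_of_pos hx0 β
    have h1xb : (0:ℝ) < (1-x) ^ β := Real.rpow_pos_of_pos h1x β
    rw [Real.rpow_sub h1x, Real.rpow_one]
    field_simp
  rw [hcong, real_beta_Ioo (1-β) β (by linarith) hβ0]
  rw [sub_add_cancel, Real.Gamma_one, div_one, mul_comm, Real.Gamma_mul_Gamma_one_sub β]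


/-- For `α ∈ (0,2)` and `|a| < 1`,
`∫₁^∞ 2r/((r²−1)^{α/2}(r²−a²)) dr = (π/sin(απ/2)) (1−a²)^{−α/2}`. -/
theorem beta_type_integral_over_Ioi_one (α a : ℝ) (hα : α ∈ Set.Ioo (0 : ℝ) 2)
    (ha : |a| < 1) :
    ∫ r in Set.Ioi (1 : ℝ), 2 * r / ((r ^ 2 - 1) ^ (α / 2) * (r ^ 2 - a ^ 2))
      = (π / Real.sin (α * π / 2)) * (1 - a ^ 2) ^ (-(α / 2)) := by
  obtain ⟨hα0, hα2⟩ := hα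
  set β := α / 2 with hβ
  have hβ0 : 0 < β := by positivity
  have hβ1 : β < 1 := by rw [hβ]; linarith
  have hc : 0 < 1 - a ^ 2 := by
    nlinarith [sq_abs a, abs_nonneg a]
  set c := 1 - a ^ 2 with hcdef
  -- Step 1: substitution r ↦ r² - 1
  have himg : (fun r : ℝ => r ^ 2 - 1) '' Set.Ioi 1 = Set.Ioi 0 := by
    ext s
    constructor
    · rintro ⟨r, hr, rfl⟩
      have : (1:ℝ) < r := hr
      simp only [Set.mem_Ioi]
      nlinarith
    · intro hs
      have hs' : (0:ℝ) < s := hs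
      refine ⟨Real.sqrt (s + 1), ?_, ?_⟩
      · exact Set.mem_Ioi.mpr ((Real.lt_sqrt (by positivity)).mpr (by nlinarith))
      · show Real.sqrt (s + 1) ^ 2 - 1 = s
        rw [Real.sq_sqrt (by linarith : (0:ℝ) ≤ s + 1)]
        ring
  have hderiv : ∀ r ∈ Set.Ioi (1:ℝ), HasDerivWithinAt (fun r : ℝ => r ^ 2 - 1)
      (2 * r) (Set.Ioi 1) r := by
    intro r _
    have : HasDerivAt (fun r : ℝ => r ^ 2 - 1) (2 * r) r := by
      simpa using ((hasDerivAt_pow 2 r).sub_const 1)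
    exact this.hasDerivWithinAt
  have hinj : Set.InjOn (fun r : ℝ => r ^ 2 - 1) (Set.Ioi 1) := by
    intro x hx y hy hxy
    simp only [Set.mem_Ioi] at hx hy
    simp only at hxy
    nlinarith
  have step1 := MeasureTheory.integral_image_eq_integral_abs_deriv_smul measurableSet_Ioi hderiv
    hinj (fun s => s ^ (-β) / (s + c))
  rw [himg] at step1
  have step1' : ∫ s in Set.Ioi (0:ℝ), s ^ (-β) / (s + c)
      = ∫ r in Set.Ioi (1:ℝ), 2 * r / ((r ^ 2 - 1) ^ (α / 2) * (r ^ 2 - a ^ 2)) := by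
    rw [step1]
    refine setIntegral_congr_fun measurableSet_Ioi (fun r hr => ?_)
    have hr1 : (1:ℝ) < r := hr
    have hr0 : (0:ℝ) < r ^ 2 - 1 := by nlinarith
    rw [smul_eq_mul, abs_of_nonneg (by linarith : (0:ℝ) ≤ 2 * r),
      Real.rpow_neg hr0.le]
    rw [show r ^ 2 - 1 + c = r ^ 2 - a ^ 2 by rw [hcdef]; ring]
    rw [hβ]
    have hne : (r ^ 2 - 1) ^ (α / 2) ≠ 0 := (Real.rpow_pos_of_pos hr0 _).ne'
    field_simp
  -- Step 2: scaling s = c * x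
  have step2 : ∫ s in Set.Ioi (0:ℝ), s ^ (-β) / (s + c)
      = c ^ (-β) * ∫ t in Set.Ioi (0:ℝ), t ^ (-β) / (1 + t) := by
    have h := MeasureTheory.integral_comp_mul_left_Ioi
      (fun s => s ^ (-β) / (s + c)) 0 hc
    rw [mul_zero] at h
    have hcong : ∫ x in Set.Ioi (0:ℝ), (fun s => s ^ (-β) / (s + c)) (c * x)
        = ∫ x in Set.Ioi (0:ℝ), c ^ (-β) * c⁻¹ * (x ^ (-β) / (1 + x)) := by
      refine setIntegral_congr_fun measurableSet_Ioi (fun x hx => ?_)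
      have hx0 : (0:ℝ) < x := hx
      simp only
      rw [Real.mul_rpow hc.le hx0.le,
        show c * x + c = c * (1 + x) by ring]
      field_simp
    rw [hcong, MeasureTheory.integral_const_mul] at h
    simp only [smul_eq_mul] at h
    field_simp at h
    linarith [h]
  rw [← step1', step2, beta_Ioi β hβ0 hβ1]
  rw [show π * β = α * π / 2 by rw [hβ]; ring, hβ]
  ring
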